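/- Let M be a matroid on a finite metric space (U,d) of rank at least 3, let f be a normalized, non-negative, monotone submodular set function on U, let λ ≥ 0, and set φ(S) = f(S) + λ·d(S). Suppose S is a basis of M that is locally optimal under single swaps: for every u ∈ U∖S and v ∈ S such that (S∖{v})∪{u} is independent in M, φ((S∖{v})∪{u}) ≤ φ(S). Then for every basis O of M, φ(S) ≥ (1/2)·φ(O). (The single-swap local search algorithm is a 2-approximation for max-sum diversification with a matroid constraint.) -/

import Mathlib

open Finset

set_option linter.unusedSectionVars false
set_option maxHeartbeats 1000000

noncomputable def dispSet {U : Type*} (d : U → U → ℝ) (S : Finset U) : ℝ :=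
  (∑ u ∈ S, ∑ v ∈ S, d u v) / 2

noncomputable def pairE {U : Type*} (d : U → U → ℝ) (P Q : Finset U) : ℝ :=
  ∑ u ∈ P, ∑ v ∈ Q, d u v

section Helpers

variable {U : Type*} [DecidableEq U] {d : U → U → ℝ}

lemma pairE_symm (hsymm : ∀ u v, d u v = d v u) (P Q : Finset U) :
    pairE d P Q = pairE d Q P := by
  unfold pairE
  rw [Finset.sum_comm]
  exact Finset.sum_congr rfl fun u _ => Finset.sum_congr rfl fun v _ => hsymm v u

lemma pairE_nonneg (hnonneg : ∀ u v, 0 ≤ d u v) (P Q : Finset U) : 0 ≤ pairE d P Q :=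
  Finset.sum_nonneg fun u _ => Finset.sum_nonneg fun v _ => hnonneg u v

lemma dispSet_eq (T : Finset U) : dispSet d T = pairE d T T / 2 := rfl

lemma dispSet_nonneg (hnonneg : ∀ u v, 0 ≤ d u v) (T : Finset U) : 0 ≤ dispSet d T := by
  rw [dispSet_eq]
  have := pairE_nonneg hnonneg T T
  linarith

lemma dispSet_union (hsymm : ∀ u v, d u v = d v u) {P Q : Finset U} (h : Disjoint P Q) :
    dispSet d (P ∪ Q) = dispSet d P + pairE d P Q + dispSet d Q := by
  have h2 : pairE d Q P = pairE d P Q := pairE_symm hsymm Q P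
  unfold dispSet pairE at *
  rw [Finset.sum_union h]
  simp_rw [Finset.sum_union h, Finset.sum_add_distrib]
  linarith

lemma dispSet_insert (hsymm : ∀ u v, d u v = d v u) (hrefl : ∀ u, d u u = 0)
    {u : U} {T : Finset U} (hu : u ∉ T) :
    dispSet d (insert u T) = dispSet d T + ∑ x ∈ T, d u x := by
  unfold dispSet
  rw [Finset.sum_insert hu]
  simp_rw [Finset.sum_insert hu, hrefl u, Finset.sum_add_distrib]
  have : ∑ x ∈ T, d x u = ∑ x ∈ T, d u x :=
    Finset.sum_congr rfl fun x _ => hsymm x u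
  linarith

lemma dispSet_small (hrefl : ∀ u, d u u = 0) {T : Finset U} (h : T.card ≤ 1) :
    dispSet d T = 0 := by
  unfold dispSet
  have hT := Finset.card_le_one.mp h
  have : ∀ u ∈ T, ∑ v ∈ T, d u v = 0 := by
    intro u hu
    apply Finset.sum_eq_zero
    intro v hv
    rw [hT v hv u hu, hrefl]
  rw [Finset.sum_eq_zero this]
  norm_num

end Helpers

section Matroid
variable {U : Type*} [DecidableEq U] (Ind : Finset U → Prop)

lemma indep_extend
    (h_aug : ∀ ⦃A B : Finset U⦄, Ind A → Ind B → B.card < A.card →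
      ∃ e ∈ A \ B, Ind (insert e B))
    (S : Finset U) (hS : Ind S) :
    ∀ n (I : Finset U), Ind I → I.card + n = S.card →
      ∃ J, I ⊆ J ∧ Ind J ∧ J.card = S.card ∧ J ⊆ I ∪ S := by
  intro n
  induction n with
  | zero =>
    intro I hI h
    exact ⟨I, subset_rfl, hI, by omega, subset_union_left⟩
  | succ n ih =>
    intro I hI h
    have hlt : I.card < S.card := by omega
    obtain ⟨e, he, hins⟩ := h_aug hS hI hlt
    rw [mem_sdiff] at he
    obtain ⟨J, h1, h2, h3, h4⟩ := ih (insert e I) hins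
      (by rw [card_insert_of_notMem he.2]; omega)
    refine ⟨J, (subset_insert _ _).trans h1, h2, h3, h4.trans ?_⟩
    intro x hx
    rcases mem_union.mp hx with hx | hx
    · rcases mem_insert.mp hx with rfl | hx
      · exact mem_union_right _ he.1
      · exact mem_union_left _ hx
    · exact mem_union_right _ hx

lemma indep_card_le_of_max
    (h_aug : ∀ ⦃A B : Finset U⦄, Ind A → Ind B → B.card < A.card →
      ∃ e ∈ A \ B, Ind (insert e B))
    {T J I : Finset U} (hJ : Ind J) (hI : Ind I) (hIT : I ⊆ T)
    (hmax : ∀ x ∈ T, Ind (insert x J) → x ∈ J) : I.card ≤ J.card := by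
  by_contra hcon
  push_neg at hcon
  obtain ⟨e, he, hins⟩ := h_aug hI hJ hcon
  rw [mem_sdiff] at he
  exact he.2 (hmax e (hIT he.1) hins)

end Matroid

section Submod
variable {U : Type*} [DecidableEq U] (f : Finset U → ℝ)
variable (hfsub : ∀ (S T : Finset U) (u : U), S ⊆ T →
      f (insert u T) - f T ≤ f (insert u S) - f S)

include hfsub

lemma submod_erase_sum (S : Finset U) :
    ∀ V : Finset U, V ⊆ S → ∑ v ∈ V, (f S - f (S.erase v)) ≤ f S - f (S \ V) := by
  intro V
  induction V using Finset.induction_on with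
  | empty => simp
  | insert v V' hv ih =>
    intro hVS
    have hvS : v ∈ S := hVS (mem_insert_self _ _)
    have hV'S : V' ⊆ S := (subset_insert _ _).trans hVS
    have hvSV' : v ∈ S \ V' := mem_sdiff.mpr ⟨hvS, hv⟩
    have key : f S - f (S.erase v) ≤ f (S \ V') - f (S \ insert v V') := by
      have h1 := hfsub ((S \ V').erase v) (S.erase v) v
        (erase_subset_erase v sdiff_subset)
      rw [insert_erase hvS, insert_erase hvSV'] at h1
      rw [sdiff_insert]
      linarith
    rw [sum_insert hv]
    have := ih hV'S
    linarith

lemma submod_insert_sum (S : Finset U) :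
    ∀ C : Finset U, f (S ∪ C) - f S ≤ ∑ o ∈ C, (f (insert o S) - f S) := by
  intro C
  induction C using Finset.induction_on with
  | empty => simp
  | insert o C' ho ih =>
    have h1 := hfsub S (S ∪ C') o subset_union_left
    rw [sum_insert ho, union_insert]
    linarith

end Submod

theorem stmt_3 {U : Type*} [Fintype U] [DecidableEq U] (d : U → U → ℝ)
    (hsymm : ∀ u v, d u v = d v u)
    (hnonneg : ∀ u v, 0 ≤ d u v)
    (hrefl : ∀ u, d u u = 0)
    (htri : ∀ u v w, d u w ≤ d u v + d v w)
    -- the matroid, given by its independent sets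
    (Ind : Finset U → Prop)
    (h_empty : Ind ∅)
    (h_hered : ∀ ⦃S T : Finset U⦄, Ind T → S ⊆ T → Ind S)
    (h_aug : ∀ ⦃A B : Finset U⦄, Ind A → Ind B → B.card < A.card →
      ∃ e ∈ A \ B, Ind (insert e B))
    -- the rank of the matroid (the common cardinality of its bases) is at least 3
    (h_rank : ∀ B : Finset U, Ind B → (∀ T, Ind T → B ⊆ T → B = T) → 3 ≤ B.card)
    -- the quality function
    (f : Finset U → ℝ)
    (hf0 : f ∅ = 0)
    (hfnonneg : ∀ S, 0 ≤ f S)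
    (hfmono : ∀ S T : Finset U, S ⊆ T → f S ≤ f T)
    (hfsub : ∀ (S T : Finset U) (u : U), S ⊆ T →
      f (insert u T) - f T ≤ f (insert u S) - f S)
    (lam : ℝ) (hlam : 0 ≤ lam)
    -- `S` is a basis of the matroid which is locally optimal under single swaps
    (S : Finset U) (hSind : Ind S) (hSbasis : ∀ T, Ind T → S ⊆ T → S = T)
    (hlocal : ∀ u ∉ S, ∀ v ∈ S, Ind (insert u (S.erase v)) →
      f (insert u (S.erase v)) + lam * dispSet d (insert u (S.erase v)) ≤
        f S + lam * dispSet d S)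
    -- `O` is any basis of the matroid
    (O : Finset U) (hOind : Ind O) (hObasis : ∀ T, Ind T → O ⊆ T → O = T) :
    f S + lam * dispSet d S ≥ (1 / 2) * (f O + lam * dispSet d O) := by
  classical
  set A := S ∩ O with hA
  set B := S \ O with hB
  set C := O \ S with hC
  have hAS : A ⊆ S := inter_subset_left
  have hAO : A ⊆ O := inter_subset_right
  have hBS : B ⊆ S := sdiff_subset
  have hCO : C ⊆ O := sdiff_subset
  have hdAB : Disjoint A B :=
    disjoint_left.mpr fun x hxA hxB => (mem_sdiff.mp hxB).2 (mem_inter.mp hxA).2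
  have hdAC : Disjoint A C :=
    disjoint_left.mpr fun x hxA hxC => (mem_sdiff.mp hxC).2 (mem_inter.mp hxA).1
  have hSAB : A ∪ B = S := by rw [hA, hB, union_comm]; exact sdiff_union_inter S O
  have hOAC : A ∪ C = O := by rw [hA, hC, inter_comm, union_comm]; exact sdiff_union_inter O S
  -- cardinalities
  have hcard_le : ∀ (P Q : Finset U), Ind P → (∀ T, Ind T → P ⊆ T → P = T) →
      Ind Q → Q.card ≤ P.card := by
    intro P Q hP hPb hQ
    by_contra hcon
    push_neg at hcon
    obtain ⟨e, he, hins⟩ := h_aug hQ hP hcon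
    rw [mem_sdiff] at he
    have heq := hPb _ hins (subset_insert _ _)
    have : e ∈ P := by rw [heq]; exact mem_insert_self _ _
    exact he.2 this
  have hSO : S.card = O.card :=
    le_antisymm (hcard_le O S hOind hObasis hSind) (hcard_le S O hSind hSbasis hOind)
  have hABcard : A.card + B.card = S.card := by
    rw [← hSAB, card_union_of_disjoint hdAB]
  have hACcard : A.card + C.card = O.card := by
    rw [← hOAC, card_union_of_disjoint hdAC]
  have hBCcard : B.card = C.card := by omega
  -- the candidate swap partners
  set valid : U → Finset U := fun o => B.filter (fun v => Ind (insert o (S.erase v)))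
    with hvalid
  -- Hall condition
  have hall : ∀ X : Finset U, X ⊆ C → X.card ≤ (X.biUnion valid).card := by
    intro X hXC
    set N := X.biUnion valid with hN
    have hNB : N ⊆ B := biUnion_subset.mpr fun o _ => filter_subset _ _
    have hXcard : X.card ≤ C.card := card_le_card hXC
    have hANS : A ∪ N ⊆ S := union_subset hAS (hNB.trans hBS)
    have hAN : Ind (A ∪ N) := h_hered hSind hANS
    have hAX : Ind (A ∪ X) := h_hered hOind (union_subset hAO (hXC.trans hCO))
    have hdAN : Disjoint A N := hdAB.mono_right hNB
    have hdAX : Disjoint A X := hdAC.mono_right hXC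
    by_cases hBN : B ⊆ N
    · have hNBeq : N = B := subset_antisymm hNB hBN
      rw [hNBeq]
      omega
    · have hNlt : N.card < B.card :=
        card_lt_card (Finset.ssubset_iff_subset_ne.mpr ⟨hNB, fun h => hBN h.ge⟩)
      have hmax : ∀ o ∈ X, ¬ Ind (insert o (A ∪ N)) := by
        intro o hoX hind
        have hoC : o ∈ C := hXC hoX
        rw [hC, mem_sdiff] at hoC
        obtain ⟨hoO, hoS⟩ := hoC
        have hoAN : o ∉ A ∪ N := fun h => hoS (hANS h)
        have hKcard : (insert o (A ∪ N)).card ≤ S.card := by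
          rw [card_insert_of_notMem hoAN, card_union_of_disjoint hdAN]
          omega
        obtain ⟨J, hKJ, hJind, hJcard, hJsub⟩ :=
          indep_extend Ind h_aug S hSind (S.card - (insert o (A ∪ N)).card) _ hind
            (by omega)
        have hJoS : J ⊆ insert o S :=
          hJsub.trans (union_subset (insert_subset_insert _ hANS) (subset_insert _ _))
        have hoJ : o ∈ J := hKJ (mem_insert_self _ _)
        have hJeo : J.erase o ⊆ S := by
          intro x hx
          rcases mem_insert.mp (hJoS (mem_of_mem_erase hx)) with rfl | hxS
          · exact absurd rfl (mem_erase.mp hx).1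
          · exact hxS
        have hJeocard : (J.erase o).card = S.card - 1 := by
          rw [card_erase_of_mem hoJ, hJcard]
        have hSJeq : S \ J = S \ (J.erase o) := by
          ext x
          simp only [mem_sdiff, mem_erase]
          constructor
          · rintro ⟨hxS, hxJ⟩
            exact ⟨hxS, fun h => hxJ h.2⟩
          · rintro ⟨hxS, hx⟩
            refine ⟨hxS, fun hxJ => hx ⟨fun h => hoS (h ▸ hxS), hxJ⟩⟩
        have hScard1 : 1 ≤ S.card := by
          have := h_rank S hSind hSbasis; omega
        have hSJcard : (S \ J).card = 1 := by
          rw [hSJeq, card_sdiff_of_subset hJeo, hJeocard]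
          omega
        obtain ⟨v, hveq⟩ := card_eq_one.mp hSJcard
        have hvmem : v ∈ S \ J := by rw [hveq]; exact mem_singleton_self v
        have hvS : v ∈ S := (mem_sdiff.mp hvmem).1
        have hvJ : v ∉ J := (mem_sdiff.mp hvmem).2
        have hJeq : J = insert o (S.erase v) := by
          ext x
          constructor
          · intro hxJ
            rcases mem_insert.mp (hJoS hxJ) with rfl | hxS
            · exact mem_insert_self _ _
            · refine mem_insert_of_mem (mem_erase.mpr ⟨?_, hxS⟩)
              rintro rfl
              exact hvJ hxJ
          · intro hx
            rcases mem_insert.mp hx with rfl | hx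
            · exact hoJ
            · obtain ⟨hxv, hxS⟩ := mem_erase.mp hx
              by_contra hxJ
              have : x ∈ S \ J := mem_sdiff.mpr ⟨hxS, hxJ⟩
              rw [hveq] at this
              exact hxv (mem_singleton.mp this)
        have hvB : v ∈ B := by
          rw [hB, mem_sdiff]
          refine ⟨hvS, fun hvO => ?_⟩
          have hvA : v ∈ A := by rw [hA]; exact mem_inter.mpr ⟨hvS, hvO⟩
          exact hvJ (hKJ (mem_insert_of_mem (mem_union_left _ hvA)))
        have hvvalid : v ∈ valid o := by
          rw [hvalid]
          refine mem_filter.mpr ⟨hvB, ?_⟩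
          rw [← hJeq]
          exact hJind
        have hvN : v ∈ N := by rw [hN]; exact mem_biUnion.mpr ⟨o, hoX, hvvalid⟩
        exact hvJ (hKJ (mem_insert_of_mem (mem_union_right _ hvN)))
      have hle : (A ∪ X).card ≤ (A ∪ N).card := by
        refine indep_card_le_of_max Ind h_aug hAN hAX (T := A ∪ N ∪ X) ?_ ?_
        · intro x hx
          rcases mem_union.mp hx with h | h
          · exact mem_union_left _ (mem_union_left _ h)
          · exact mem_union_right _ h
        · intro x hx hind
          rcases mem_union.mp hx with h | h
          · exact h
          · exact absurd hind (hmax x h)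
      rw [card_union_of_disjoint hdAX, card_union_of_disjoint hdAN] at hle
      omega
  -- Hall's theorem gives the exchange bijection
  have hallcond : ∀ s : Finset {x // x ∈ C},
      s.card ≤ (s.biUnion fun o => valid o.val).card := by
    intro s
    have h1 : (s.image Subtype.val).card = s.card :=
      card_image_of_injective s Subtype.val_injective
    have h2 : s.biUnion (fun o => valid o.val) = (s.image Subtype.val).biUnion valid := by
      ext y
      simp only [mem_biUnion, mem_image]
      constructor
      · rintro ⟨o, ho, hy⟩
        exact ⟨o.val, ⟨o, ho, rfl⟩, hy⟩
      · rintro ⟨x, ⟨o, ho, rfl⟩, hy⟩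
        exact ⟨o, ho, hy⟩
    rw [h2, ← h1]
    apply hall
    intro x hx
    rw [mem_image] at hx
    obtain ⟨o, _, rfl⟩ := hx
    exact o.2
  obtain ⟨g0, hg0inj, hg0mem⟩ :=
    (Finset.all_card_le_biUnion_card_iff_exists_injective _).mp hallcond
  set g : U → U := fun x => if h : x ∈ C then g0 ⟨x, h⟩ else x with hgdef
  have hgmem : ∀ o ∈ C, g o ∈ valid o := by
    intro o ho
    show (if h : o ∈ C then g0 ⟨o, h⟩ else o) ∈ valid o
    rw [dif_pos ho]
    exact hg0mem ⟨o, ho⟩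
  have hgB : ∀ o ∈ C, g o ∈ B := fun o ho => (mem_filter.mp (hgmem o ho)).1
  have hgInd : ∀ o ∈ C, Ind (insert o (S.erase (g o))) :=
    fun o ho => (mem_filter.mp (hgmem o ho)).2
  have hginj : ∀ o₁ ∈ C, ∀ o₂ ∈ C, g o₁ = g o₂ → o₁ = o₂ := by
    intro o₁ h₁ o₂ h₂ h
    have : (if h : o₁ ∈ C then g0 ⟨o₁, h⟩ else o₁) = (if h : o₂ ∈ C then g0 ⟨o₂, h⟩ else o₂) := h
    rw [dif_pos h₁, dif_pos h₂] at this
    exact congrArg Subtype.val (hg0inj this)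
  have himgB : C.image g ⊆ B := by
    intro x hx
    rw [mem_image] at hx
    obtain ⟨o, ho, rfl⟩ := hx
    exact hgB o ho
  -- splitting S.erase v for v ∈ B
  have hdABe : ∀ v : U, Disjoint A (B.erase v) := fun v => hdAB.mono_right (erase_subset _ _)
  have hSerase : ∀ v ∈ B, S.erase v = A ∪ B.erase v := by
    intro v hv
    have hvA : v ∉ A := disjoint_left.mp hdAB.symm hv
    rw [← hSAB, erase_union_distrib, erase_eq_of_notMem hvA]
  -- the key local-optimality inequality, per element of C
  have hkey : ∀ o ∈ C, lam * ((∑ x ∈ A, d o x) + ∑ x ∈ B.erase (g o), d o x) ≤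
      (f S - f (insert o S)) + (f S - f (S.erase (g o)))
        + lam * (∑ x ∈ S.erase (g o), d (g o) x) := by
    intro o hoC
    have hoS : o ∉ S := by
      have := hoC
      rw [hC, mem_sdiff] at this
      exact this.2
    have hvS : g o ∈ S := hBS (hgB o hoC)
    have hloc := hlocal o hoS (g o) hvS (hgInd o hoC)
    have hov : o ∉ S.erase (g o) := fun h => hoS (mem_of_mem_erase h)
    have h1 : dispSet d (insert o (S.erase (g o))) =
        dispSet d (S.erase (g o)) + ∑ x ∈ S.erase (g o), d o x :=
      dispSet_insert hsymm hrefl hov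
    have h2 : dispSet d S = dispSet d (S.erase (g o)) + ∑ x ∈ S.erase (g o), d (g o) x := by
      conv_lhs => rw [← insert_erase hvS]
      exact dispSet_insert hsymm hrefl (notMem_erase _ _)
    have h3 : f (insert o S) - f (insert o (S.erase (g o))) ≤ f S - f (S.erase (g o)) := by
      have h := hfsub (S.erase (g o)) (insert o (S.erase (g o))) (g o) (subset_insert _ _)
      rw [Finset.insert_comm, insert_erase hvS] at h
      linarith
    have hsplit : ∑ x ∈ S.erase (g o), d o x
        = (∑ x ∈ A, d o x) + ∑ x ∈ B.erase (g o), d o x := by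
      rw [hSerase (g o) (hgB o hoC), sum_union (hdABe (g o))]
    rw [h1, h2] at hloc
    rw [mul_add, mul_add] at hloc
    rw [← hsplit]
    linarith
  -- sum the key inequality over C
  have hsummed : lam * (pairE d C A) + lam * (∑ o ∈ C, ∑ x ∈ B.erase (g o), d o x) ≤
      (∑ o ∈ C, (f S - f (insert o S))) + (∑ o ∈ C, (f S - f (S.erase (g o))))
      + lam * (∑ o ∈ C, ∑ x ∈ S.erase (g o), d (g o) x) := by
    have hs := Finset.sum_le_sum hkey
    simp only [mul_add, Finset.sum_add_distrib, ← Finset.mul_sum] at hs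
    rw [pairE]
    exact hs
  -- bound the three pieces of the right-hand side
  have hOSC : O ⊆ S ∪ C := by
    rw [← hOAC]
    exact union_subset (hAS.trans subset_union_left) subset_union_right
  have hR1 : ∑ o ∈ C, (f S - f (insert o S)) ≤ f S - f O := by
    have h1 := submod_insert_sum f hfsub S C
    have h2 : f O ≤ f (S ∪ C) := hfmono _ _ hOSC
    have h3 : ∑ o ∈ C, (f S - f (insert o S)) = - ∑ o ∈ C, (f (insert o S) - f S) := by
      rw [← Finset.sum_neg_distrib]
      exact Finset.sum_congr rfl fun o _ => by ring
    linarith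
  have hR2 : ∑ o ∈ C, (f S - f (S.erase (g o))) ≤ f S := by
    have him : ∑ v ∈ C.image g, (f S - f (S.erase v))
        = ∑ o ∈ C, (f S - f (S.erase (g o))) := Finset.sum_image hginj
    rw [← him]
    have h1 := submod_erase_sum f hfsub S (C.image g) (himgB.trans hBS)
    have h2 := hfnonneg (S \ C.image g)
    linarith
  have hR3 : ∑ o ∈ C, ∑ x ∈ S.erase (g o), d (g o) x ≤ pairE d B A + 2 * dispSet d B := by
    have him : ∑ v ∈ C.image g, ∑ x ∈ S.erase v, d v x
        = ∑ o ∈ C, ∑ x ∈ S.erase (g o), d (g o) x := Finset.sum_image hginj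
    rw [← him]
    have hsub : ∑ v ∈ C.image g, ∑ x ∈ S.erase v, d v x
        ≤ ∑ v ∈ B, ∑ x ∈ S.erase v, d v x :=
      Finset.sum_le_sum_of_subset_of_nonneg himgB
        (fun v _ _ => Finset.sum_nonneg fun x _ => hnonneg v x)
    have hsplit : ∑ v ∈ B, ∑ x ∈ S.erase v, d v x
        = pairE d B A + ∑ v ∈ B, ∑ x ∈ B.erase v, d v x := by
      have h1 : ∀ v ∈ B, ∑ x ∈ S.erase v, d v x
          = (∑ x ∈ A, d v x) + ∑ x ∈ B.erase v, d v x := by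
        intro v hv
        rw [hSerase v hv, sum_union (hdABe v)]
      rw [Finset.sum_congr rfl h1, Finset.sum_add_distrib, pairE]
    have hlast : ∑ v ∈ B, ∑ x ∈ B.erase v, d v x = 2 * dispSet d B := by
      have h1 : ∀ v ∈ B, ∑ x ∈ B.erase v, d v x = ∑ x ∈ B, d v x := by
        intro v hv
        rw [Finset.sum_erase_eq_sub hv, hrefl]
        ring
      rw [Finset.sum_congr rfl h1, dispSet_eq, pairE]
      ring
    linarith
  -- the metric lemma
  have hLBnonneg : 0 ≤ ∑ o ∈ C, ∑ x ∈ B.erase (g o), d o x :=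
    Finset.sum_nonneg fun o _ => Finset.sum_nonneg fun x _ => hnonneg o x
  have hdispAnn := dispSet_nonneg hnonneg A
  have hpairABnn := pairE_nonneg hnonneg A B
  have hstar : dispSet d C ≤ (∑ o ∈ C, ∑ x ∈ B.erase (g o), d o x)
      + (dispSet d A + pairE d A B) := by
    rcases lt_or_ge C.card 2 with hk | hk
    · rw [dispSet_small hrefl (by omega)]
      linarith
    rcases eq_or_lt_of_le hk with hk2 | hk3
    · -- |C| = 2
      obtain ⟨o₁, o₂, hne, hCeq⟩ := Finset.card_eq_two.mp hk2.symm
      have ho₁ : o₁ ∈ C := by rw [hCeq]; exact mem_insert_self _ _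
      have ho₂ : o₂ ∈ C := by rw [hCeq]; exact mem_insert_of_mem (mem_singleton_self _)
      have hS3 : 3 ≤ S.card := h_rank S hSind hSbasis
      have hA1 : 0 < A.card := by omega
      obtain ⟨a, haA⟩ := Finset.card_pos.mp hA1
      have hv₁B := hgB o₁ ho₁
      have hv₂B := hgB o₂ ho₂
      have hvne : g o₁ ≠ g o₂ := fun h => hne (hginj o₁ ho₁ o₂ ho₂ h)
      have hdC : dispSet d C = d o₁ o₂ := by
        rw [hCeq]
        unfold dispSet
        simp only [Finset.sum_pair hne]
        rw [hrefl, hrefl, hsymm o₂ o₁]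
        ring
      have hsum2 : ∑ o ∈ C, ∑ x ∈ B.erase (g o), d o x
          = (∑ x ∈ B.erase (g o₁), d o₁ x) + ∑ x ∈ B.erase (g o₂), d o₂ x := by
        rw [hCeq, Finset.sum_pair hne]
      have hb1 : d o₁ (g o₂) ≤ ∑ x ∈ B.erase (g o₁), d o₁ x :=
        Finset.single_le_sum (fun x _ => hnonneg o₁ x)
          (mem_erase.mpr ⟨Ne.symm hvne, hv₂B⟩)
      have hb2 : d o₂ (g o₁) ≤ ∑ x ∈ B.erase (g o₂), d o₂ x :=
        Finset.single_le_sum (fun x _ => hnonneg o₂ x)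
          (mem_erase.mpr ⟨hvne, hv₁B⟩)
      have hb3 : d a (g o₁) + d a (g o₂) ≤ pairE d A B := by
        have h1 : d a (g o₁) + d a (g o₂) = ∑ x ∈ ({g o₁, g o₂} : Finset U), d a x :=
          (Finset.sum_pair hvne).symm
        have h2 : ∑ x ∈ ({g o₁, g o₂} : Finset U), d a x ≤ ∑ x ∈ B, d a x :=
          Finset.sum_le_sum_of_subset_of_nonneg
            (insert_subset hv₁B (singleton_subset_iff.mpr hv₂B))
            (fun x _ _ => hnonneg a x)
        have h3 : ∑ x ∈ B, d a x ≤ pairE d A B :=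
          Finset.single_le_sum (f := fun u => ∑ x ∈ B, d u x)
            (fun u _ => Finset.sum_nonneg fun x _ => hnonneg u x) haA
        linarith
      have ht1 := htri o₁ (g o₂) o₂
      have ht2 := htri (g o₂) (g o₁) o₂
      have ht3 := htri (g o₂) a (g o₁)
      have e1 : d (g o₂) a = d a (g o₂) := hsymm _ _
      have e2 : d (g o₁) o₂ = d o₂ (g o₁) := hsymm _ _
      rw [hdC, hsum2]
      linarith
    · -- |C| ≥ 3
      have hk3' : 3 ≤ C.card := hk3
      have hkR : (3:ℝ) ≤ (C.card : ℝ) := by exact_mod_cast hk3'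
      have hcast : ((C.card - 2 : ℕ) : ℝ) = (C.card : ℝ) - 2 := by
        rw [Nat.cast_sub (by omega)]
        norm_num
      have hper : ∀ ℓ ∈ C, pairE d C C - 2 * (∑ j ∈ C, d ℓ j)
          ≤ 2 * ((C.card:ℝ) - 2) * ∑ i ∈ C.erase ℓ, d i (g ℓ) := by
        intro ℓ hℓ
        have hT : (C.erase ℓ).card = C.card - 1 := card_erase_of_mem hℓ
        have hid : ∑ i ∈ C.erase ℓ, ∑ j ∈ C.erase ℓ, d i j
            = pairE d C C - 2 * ∑ j ∈ C, d ℓ j := by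
          have h1 : ∀ i ∈ C.erase ℓ, ∑ j ∈ C.erase ℓ, d i j
              = (∑ j ∈ C, d i j) - d i ℓ := fun i _ => Finset.sum_erase_eq_sub hℓ
          rw [Finset.sum_congr rfl h1, Finset.sum_erase_eq_sub hℓ,
            Finset.sum_sub_distrib]
          have h2 : ∑ i ∈ C, d i ℓ = ∑ j ∈ C, d ℓ j :=
            Finset.sum_congr rfl fun i _ => hsymm i ℓ
          rw [h2, hrefl, pairE]
          ring
        have hoffdiag : ∑ i ∈ C.erase ℓ, ∑ j ∈ C.erase ℓ, d i j
            = ∑ i ∈ C.erase ℓ, ∑ j ∈ (C.erase ℓ).erase i, d i j := by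
          refine Finset.sum_congr rfl fun i hi => ?_
          rw [Finset.sum_erase_eq_sub hi, hrefl]
          ring
        have hstep2 : ∑ i ∈ C.erase ℓ, ∑ j ∈ (C.erase ℓ).erase i, d i j
            ≤ ∑ i ∈ C.erase ℓ, ∑ j ∈ (C.erase ℓ).erase i, (d i (g ℓ) + d j (g ℓ)) := by
          refine Finset.sum_le_sum fun i _ => Finset.sum_le_sum fun j _ => ?_
          have h := htri i (g ℓ) j
          have h' := hsymm (g ℓ) j
          linarith
        have hcaste : ∀ i ∈ C.erase ℓ, (((C.erase ℓ).erase i).card : ℝ)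
            = (C.card : ℝ) - 2 := by
          intro i hi
          rw [card_erase_of_mem hi, hT]
          have : (C.card - 1 - 1 : ℕ) = C.card - 2 := by omega
          rw [this, hcast]
        have hev : ∑ i ∈ C.erase ℓ, ∑ j ∈ (C.erase ℓ).erase i, (d i (g ℓ) + d j (g ℓ))
            = 2 * ((C.card:ℝ) - 2) * ∑ i ∈ C.erase ℓ, d i (g ℓ) := by
          simp only [Finset.sum_add_distrib]
          have hc1 : ∀ i ∈ C.erase ℓ, ∑ _j ∈ (C.erase ℓ).erase i, d i (g ℓ)
              = ((C.card:ℝ) - 2) * d i (g ℓ) := by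
            intro i hi
            rw [Finset.sum_const, nsmul_eq_mul, hcaste i hi]
          have hc2 : ∀ i ∈ C.erase ℓ, ∑ j ∈ (C.erase ℓ).erase i, d j (g ℓ)
              = (∑ j ∈ C.erase ℓ, d j (g ℓ)) - d i (g ℓ) :=
            fun i hi => Finset.sum_erase_eq_sub hi
          rw [Finset.sum_congr rfl hc1, Finset.sum_congr rfl hc2,
            Finset.sum_sub_distrib, Finset.sum_const, nsmul_eq_mul, hT,
            ← Finset.mul_sum]
          have hTcast : ((C.card - 1 : ℕ) : ℝ) = (C.card : ℝ) - 1 := by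
            rw [Nat.cast_sub (by omega)]
            norm_num
          rw [hTcast]
          ring
        linarith
      have hsumper := Finset.sum_le_sum hper
      have hLHS : ∑ ℓ ∈ C, (pairE d C C - 2 * ∑ j ∈ C, d ℓ j)
          = ((C.card:ℝ) - 2) * pairE d C C := by
        rw [Finset.sum_sub_distrib, Finset.sum_const, nsmul_eq_mul, ← Finset.mul_sum]
        rw [show ∑ ℓ ∈ C, ∑ j ∈ C, d ℓ j = pairE d C C from rfl]
        ring
      have hRHS : ∑ ℓ ∈ C, 2 * ((C.card:ℝ) - 2) * ∑ i ∈ C.erase ℓ, d i (g ℓ)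
          = 2 * ((C.card:ℝ) - 2) * ∑ ℓ ∈ C, ∑ i ∈ C.erase ℓ, d i (g ℓ) := by
        rw [← Finset.mul_sum]
      have hswap : ∑ ℓ ∈ C, ∑ i ∈ C.erase ℓ, d i (g ℓ)
          = ∑ i ∈ C, ∑ ℓ ∈ C.erase i, d i (g ℓ) := by
        have h1 : ∀ ℓ ∈ C, ∑ i ∈ C.erase ℓ, d i (g ℓ)
            = (∑ i ∈ C, d i (g ℓ)) - d ℓ (g ℓ) := fun ℓ hℓ => Finset.sum_erase_eq_sub hℓ
        have h2 : ∀ i ∈ C, ∑ ℓ ∈ C.erase i, d i (g ℓ)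
            = (∑ ℓ ∈ C, d i (g ℓ)) - d i (g i) := fun i hi => Finset.sum_erase_eq_sub hi
        rw [Finset.sum_congr rfl h1, Finset.sum_congr rfl h2,
          Finset.sum_sub_distrib, Finset.sum_sub_distrib, Finset.sum_comm]
      have hdom : ∑ i ∈ C, ∑ ℓ ∈ C.erase i, d i (g ℓ)
          ≤ ∑ i ∈ C, ∑ x ∈ B.erase (g i), d i x := by
        refine Finset.sum_le_sum fun i hi => ?_
        have hinj' : ∀ x ∈ C.erase i, ∀ y ∈ C.erase i, g x = g y → x = y :=
          fun x hx y hy h => hginj x (mem_of_mem_erase hx) y (mem_of_mem_erase hy) h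
        have him : ∑ x ∈ (C.erase i).image g, d i x
            = ∑ ℓ ∈ C.erase i, d i (g ℓ) := Finset.sum_image hinj'
        rw [← him]
        refine Finset.sum_le_sum_of_subset_of_nonneg ?_ (fun x _ _ => hnonneg i x)
        intro x hx
        rw [mem_image] at hx
        obtain ⟨ℓ, hℓ, rfl⟩ := hx
        obtain ⟨hℓne, hℓC⟩ := mem_erase.mp hℓ
        refine mem_erase.mpr ⟨fun h => hℓne (hginj ℓ hℓC i hi h), hgB ℓ hℓC⟩
      have hkpos : (0:ℝ) < (C.card:ℝ) - 2 := by linarith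
      have hW : pairE d C C = 2 * dispSet d C := by rw [dispSet_eq]; ring
      rw [hLHS, hRHS, hswap] at hsumper
      have hchain : ((C.card:ℝ) - 2) * (2 * dispSet d C)
          ≤ ((C.card:ℝ) - 2) * (2 * ∑ i ∈ C, ∑ x ∈ B.erase (g i), d i x) := by
        rw [← hW]
        calc ((C.card:ℝ) - 2) * pairE d C C
            ≤ 2 * ((C.card:ℝ) - 2) * ∑ i ∈ C, ∑ ℓ ∈ C.erase i, d i (g ℓ) := hsumper
          _ ≤ ((C.card:ℝ) - 2) * (2 * ∑ i ∈ C, ∑ x ∈ B.erase (g i), d i x) := by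
              nlinarith [hdom, hkpos]
      have hfin : dispSet d C ≤ ∑ i ∈ C, ∑ x ∈ B.erase (g i), d i x := by
        have := le_of_mul_le_mul_left hchain hkpos
        linarith
      linarith
  -- assemble everything
  have hdispS : dispSet d S = dispSet d A + pairE d A B + dispSet d B := by
    conv_lhs => rw [← hSAB]
    exact dispSet_union hsymm hdAB
  have hdispO : dispSet d O = dispSet d A + pairE d A C + dispSet d C := by
    conv_lhs => rw [← hOAC]
    exact dispSet_union hsymm hdAC
  have hsymCA : pairE d C A = pairE d A C := pairE_symm hsymm C A
  have hsymBA : pairE d B A = pairE d A B := pairE_symm hsymm B A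
  have hstar' : lam * dispSet d C ≤ lam * (∑ o ∈ C, ∑ x ∈ B.erase (g o), d o x)
      + lam * dispSet d A + lam * pairE d A B := by
    have := mul_le_mul_of_nonneg_left hstar hlam
    rw [mul_add, mul_add] at this
    linarith
  have hR3' : lam * (∑ o ∈ C, ∑ x ∈ S.erase (g o), d (g o) x)
      ≤ lam * pairE d A B + lam * (2 * dispSet d B) := by
    have := mul_le_mul_of_nonneg_left hR3 hlam
    rw [mul_add, hsymBA] at this
    linarith
  rw [hsymCA] at hsummed
  rw [hdispS, hdispO]
  have hexp1 : lam * (dispSet d A + pairE d A B + dispSet d B)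
      = lam * dispSet d A + lam * pairE d A B + lam * dispSet d B := by ring
  have hexp2 : lam * (dispSet d A + pairE d A C + dispSet d C)
      = lam * dispSet d A + lam * pairE d A C + lam * dispSet d C := by ring
  rw [hexp1, hexp2]
  linarith
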